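/- arXiv:1903.01021 — 2 statements merged into one kernel-verified Lean document; each statement's English description precedes it below -/
import Mathlib

section
/- With P_μ-probability 1, inf_t w(μ|h_{<t}) > 0, i.e., the Bayesian posterior weight of the true environment stays bounded away from zero along almost every infinite history. -/
open MeasureTheory Filter

/-- The cylinder set of infinite sequences beginning with the finite history `h`. -/
def cylinder {H : Type*} (h : List H) : Set (ℕ → H) :=
  {ω | ∀ i : Fin h.length, ω i = h.get i}

lemma antichain_sum_le {H : Type*} (Q : List H → ENNReal)
    (qadd : ∀ h, ∑' x : H, Q (h ++ [x]) = Q h) :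
    ∀ d : ℕ, ∀ g : List H, ∀ F : Finset (List H),
      (∀ h ∈ F, g <+: h ∧ h.length ≤ g.length + d) →
      (∀ a ∈ F, ∀ b ∈ F, a ≠ b → ¬ a <+: b) →
      ∑ h ∈ F, Q h ≤ Q g := by
  intro d
  induction d with
  | zero =>
    intro g F hF hanti
    have hsub : F ⊆ {g} := by
      intro h hh
      obtain ⟨hp, hl⟩ := hF h hh
      have : g = h := hp.eq_of_length_le (by omega)
      simp [this.symm]
    calc ∑ h ∈ F, Q h ≤ ∑ h ∈ ({g} : Finset (List H)), Q h :=
          Finset.sum_le_sum_of_subset hsub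
      _ = Q g := by simp
  | succ d ih =>
    intro g F hF hanti
    by_cases hg : g ∈ F
    · have hsub : F ⊆ {g} := by
        intro h hh
        by_contra hne
        simp only [Finset.mem_singleton] at hne
        exact hanti g hg h hh (fun e => hne e.symm) (hF h hh).1
      calc ∑ h ∈ F, Q h ≤ ∑ h ∈ ({g} : Finset (List H)), Q h :=
            Finset.sum_le_sum_of_subset hsub
        _ = Q g := by simp
    · rcases F.eq_empty_or_nonempty with hFe | ⟨h₀, hh₀⟩
      · simp [hFe]
      have hlen : ∀ h ∈ F, g.length < h.length := by
        intro h hh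
        obtain ⟨hp, _⟩ := hF h hh
        rcases lt_or_eq_of_le hp.length_le with h1 | h1
        · exact h1
        · exact absurd (hp.eq_of_length h1) (by rintro rfl; exact hg hh)
      obtain ⟨t₀, ht₀⟩ := (hF h₀ hh₀).1
      have ht₀ne : t₀ ≠ [] := by
        intro e; rw [e, List.append_nil] at ht₀
        have := hlen h₀ hh₀; rw [ht₀] at this; omega
      classical
      obtain ⟨e₀, t₀', rfl⟩ := List.exists_cons_of_ne_nil ht₀ne
      set nxt : List H → H := fun h => (h.drop g.length).headD e₀ with hnxt
      have key : ∀ h ∈ F, (g ++ [nxt h]) <+: h := by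
        intro h hh
        obtain ⟨t, ht⟩ := (hF h hh).1
        have tne : t ≠ [] := by
          intro e; rw [e, List.append_nil] at ht
          have := hlen h hh; rw [ht] at this; omega
        obtain ⟨a, t', rfl⟩ := List.exists_cons_of_ne_nil tne
        have hna : nxt h = a := by
          rw [hnxt, ← ht]
          simp [List.drop_left]
        rw [hna, ← ht]
        exact ⟨t', by simp⟩
      have hfib := Finset.sum_fiberwise_of_maps_to
        (s := F) (t := F.image nxt) (g := nxt) (fun h hh => Finset.mem_image_of_mem nxt hh) Q
      rw [← hfib]
      calc ∑ x ∈ F.image nxt, ∑ h ∈ F.filter (fun h => nxt h = x), Q h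
          ≤ ∑ x ∈ F.image nxt, Q (g ++ [x]) := by
            apply Finset.sum_le_sum
            intro x hx
            apply ih (g ++ [x]) (F.filter (fun h => nxt h = x))
            · intro h hh
              rw [Finset.mem_filter] at hh
              obtain ⟨hhF, hhx⟩ := hh
              constructor
              · have := key h hhF; rwa [hhx] at this
              · have := (hF h hhF).2; simp; omega
            · intro a ha b hb
              rw [Finset.mem_filter] at ha hb
              exact hanti a ha.1 b hb.1
        _ ≤ ∑' x : H, Q (g ++ [x]) := ENNReal.sum_le_tsum _
        _ = Q g := qadd g


lemma prefix_ofFn {H : Type*} {ω : ℕ → H} {t : ℕ} {h' : List H}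
    (hp : h' <+: List.ofFn (fun i : Fin t => ω i)) :
    h' = List.ofFn (fun i : Fin h'.length => ω i) := by
  have hl : h'.length ≤ t := by simpa using hp.length_le
  apply List.ext_getElem (by simp)
  intro i hi1 hi2
  rw [hp.getElem hi1]
  simp

lemma mem_cyl_ofFn {H : Type*} (ω : ℕ → H) (t : ℕ) :
    ω ∈ cylinder (List.ofFn (fun i : Fin t => ω i)) := by
  intro i
  simp [List.get_ofFn]

lemma ville {H : Type*} [Countable H] [MeasurableSpace H]
    (P : Measure (ℕ → H)) (Q : List H → ENNReal)
    (qadd : ∀ h, ∑' x : H, Q (h ++ [x]) = Q h)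
    (bad : List H → Prop) (r : ENNReal)
    (hbad : ∀ h, bad h → P (cylinder h) ≤ r * Q h) :
    P {ω | ∃ t, bad (List.ofFn (fun i : Fin t => ω i))} ≤ r * Q [] := by
  classical
  set S : Set (List H) := {h | bad h ∧ ∀ g, g <+: h → g ≠ h → ¬ bad g} with hS
  have hsub : {ω | ∃ t, bad (List.ofFn (fun i : Fin t => ω i))} ⊆
      ⋃ (h : S), cylinder (h : List H) := by
    intro ω hω
    have hex : ∃ t, bad (List.ofFn (fun i : Fin t => ω i)) := hω
    let t₀ := Nat.find hex
    have ht₀ : bad (List.ofFn (fun i : Fin t₀ => ω i)) := Nat.find_spec hex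
    refine Set.mem_iUnion.2 ⟨⟨List.ofFn (fun i : Fin t₀ => ω i), ht₀, ?_⟩, mem_cyl_ofFn ω t₀⟩
    intro g hg hgne hbadg
    have hge : g = List.ofFn (fun i : Fin g.length => ω i) := prefix_ofFn hg
    have hglt : g.length < t₀ := by
      have hle : g.length ≤ t₀ := by simpa using hg.length_le
      rcases lt_or_eq_of_le hle with h1 | h1
      · exact h1
      · exfalso; apply hgne; rw [hge, h1]
    exact Nat.find_min hex hglt (by rw [← hge]; exact hbadg)
  calc P {ω | ∃ t, bad (List.ofFn (fun i : Fin t => ω i))}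
      ≤ P (⋃ (h : S), cylinder (h : List H)) := measure_mono hsub
    _ ≤ ∑' (h : S), P (cylinder (h : List H)) := measure_iUnion_le _
    _ ≤ ∑' (h : S), r * Q (h : List H) := ENNReal.tsum_le_tsum (fun h => hbad _ h.2.1)
    _ = r * ∑' (h : S), Q (h : List H) := ENNReal.tsum_mul_left
    _ ≤ r * Q [] := by
        apply mul_le_mul_right ?_ r
        rw [ENNReal.tsum_eq_iSup_sum]
        apply iSup_le
        intro Fs
        have hinj : ∀ x ∈ Fs, ∀ y ∈ Fs, (x : List H) = (y : List H) → x = y :=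
          fun x _ y _ e => Subtype.ext e
        have himg : ∑ h ∈ Fs.image (fun x : S => (x : List H)), Q h = ∑ a ∈ Fs, Q ↑a :=
          Finset.sum_image hinj
        rw [← himg]
        apply antichain_sum_le Q qadd
          ((Fs.image (fun x : S => (x : List H))).sup List.length) []
        · intro h hh
          exact ⟨List.nil_prefix, by simpa using Finset.le_sup (f := List.length) hh⟩
        · intro a ha b hb hab hpre
          rw [Finset.mem_image] at ha hb
          obtain ⟨⟨a', ha'S⟩, _, rfl⟩ := ha
          obtain ⟨⟨b', hb'S⟩, _, rfl⟩ := hb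
          exact hb'S.2 _ hpre hab ha'S.1

/-- With P_μ-probability 1, the Bayesian posterior weight of the true
environment, w(μ|h_{<t}) = w(μ)·P_μ(h_{<t})/P_ξ(h_{<t}), stays bounded away
from zero along the infinite history: inf_t w(μ|h_{<t}) > 0 almost surely.
Here Pμ is the cylinder-probability function of a probability measure P on
infinite sequences over a countable alphabet, and Pξ is a mixture-type
function dominating w(μ)·Pμ and satisfying the measure (additivity)
property over one-step extensions. -/
theorem stmt_5 {H : Type*} [Countable H] [MeasurableSpace H]
    [MeasurableSingletonClass H]
    (P : Measure (ℕ → H)) [IsProbabilityMeasure P]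
    (Pμ : List H → ℝ) (hPμ : ∀ h, Pμ h = (P (cylinder h)).toReal)
    (wμ : ℝ) (hwμ : 0 < wμ) (hwμ1 : wμ ≤ 1)
    (Pξ : List H → ℝ) (hPξ0 : ∀ h, 0 ≤ Pξ h) (hPξnil : Pξ [] = 1)
    (hdom : ∀ h, wμ * Pμ h ≤ Pξ h)
    (hadd : ∀ h, ∑' x : H, Pξ (h ++ [x]) = Pξ h)
    (hsum : ∀ h, Summable (fun x : H => Pξ (h ++ [x]))) :
    ∀ᵐ ω ∂P, 0 < ⨅ t : ℕ, wμ * Pμ (List.ofFn (fun i : Fin t => ω i)) /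
      Pξ (List.ofFn (fun i : Fin t => ω i)) := by
  classical
  set Q : List H → ENNReal := fun h => ENNReal.ofReal (Pξ h) with hQ
  have qadd : ∀ h, ∑' x : H, Q (h ++ [x]) = Q h := by
    intro h
    rw [hQ]
    rw [← ENNReal.ofReal_tsum_of_nonneg (fun x => hPξ0 _) (hsum h), hadd]
  have hQnil : Q [] = 1 := by simp [hQ, hPξnil]
  have hPμnn : ∀ h, 0 ≤ Pμ h := fun h => by rw [hPμ]; exact ENNReal.toReal_nonneg
  -- null set 1 : some cylinder has measure zero
  set Z : Set (List H) := {h | P (cylinder h) = 0} with hZ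
  have hN₁ : P (⋃ h : Z, cylinder (h : List H)) = 0 := by
    apply le_antisymm _ zero_le
    calc P (⋃ h : Z, cylinder (h : List H)) ≤ ∑' h : Z, P (cylinder (h : List H)) :=
          measure_iUnion_le _
      _ = 0 := by
          rw [ENNReal.tsum_eq_zero]
          exact fun h => h.2
  -- null set 2 : ratio Pξ/(wμ Pμ) unbounded
  set badp : ℕ → List H → Prop :=
    fun n h => ((n : ℝ) + 1) * (wμ * Pμ h) < Pξ h with hbadp
  set B : ℕ → Set (ℕ → H) :=
    fun n => {ω | ∃ t, badp n (List.ofFn (fun i : Fin t => ω i))} with hBdef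
  have hB : ∀ n, P (B n) ≤ ENNReal.ofReal ((((n : ℝ) + 1) * wμ)⁻¹) := by
    intro n
    have hv := ville P Q qadd (badp n) (ENNReal.ofReal ((((n : ℝ) + 1) * wμ)⁻¹)) ?_
    · rwa [hQnil, mul_one] at hv
    · intro h hb
      have hcyl : P (cylinder h) = ENNReal.ofReal (Pμ h) := by
        rw [hPμ, ENNReal.ofReal_toReal (measure_ne_top P _)]
      rw [hcyl, hQ, ← ENNReal.ofReal_mul (by positivity)]
      apply ENNReal.ofReal_le_ofReal
      have hpos : (0 : ℝ) < ((n : ℝ) + 1) * wμ := by positivity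
      rw [inv_mul_eq_div, le_div_iff₀ hpos]
      calc Pμ h * (((n : ℝ) + 1) * wμ) = ((n : ℝ) + 1) * (wμ * Pμ h) := by ring
        _ ≤ Pξ h := le_of_lt hb
  have hN₂ : P (⋂ n, B n) = 0 := by
    apply le_antisymm _ zero_le
    have hle : ∀ n : ℕ, P (⋂ m, B m) ≤ ENNReal.ofReal ((((n : ℝ) + 1) * wμ)⁻¹) :=
      fun n => (measure_mono (Set.iInter_subset B n)).trans (hB n)
    have htend : Tendsto (fun n : ℕ => ENNReal.ofReal ((((n : ℝ) + 1) * wμ)⁻¹))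
        atTop (nhds 0) := by
      rw [← ENNReal.ofReal_zero]
      apply ENNReal.tendsto_ofReal
      apply Tendsto.comp tendsto_inv_atTop_zero
      apply Tendsto.atTop_mul_const hwμ
      exact tendsto_atTop_add_const_right _ 1 tendsto_natCast_atTop_atTop
    exact ge_of_tendsto' htend hle
  rw [ae_iff]
  apply measure_mono_null ?_
    (measure_union_null (s := ⋃ h : Z, cylinder (h : List H)) (t := ⋂ n, B n) hN₁ hN₂)
  intro ω hω
  simp only [Set.mem_setOf_eq, not_lt] at hω
  by_contra hmem
  rw [Set.mem_union] at hmem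
  push_neg at hmem
  obtain ⟨hω1, hω2⟩ := hmem
  rw [Set.mem_iInter] at hω2
  push_neg at hω2
  obtain ⟨n, hn⟩ := hω2
  have hn' : ∀ t, Pξ (List.ofFn (fun i : Fin t => ω i)) ≤
      ((n : ℝ) + 1) * (wμ * Pμ (List.ofFn (fun i : Fin t => ω i))) := by
    intro t
    by_contra hc
    exact hn ⟨t, not_le.mp hc⟩
  have hPμpos : ∀ t, 0 < Pμ (List.ofFn (fun i : Fin t => ω i)) := by
    intro t
    have hmem' : (List.ofFn (fun i : Fin t => ω i)) ∉ Z := by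
      intro hin
      exact absurd (mem_cyl_ofFn ω t) (by
        intro hc
        exact (Set.mem_iUnion.not.mp hω1) ⟨⟨_, hin⟩, hc⟩)
    rw [hPμ]
    exact ENNReal.toReal_pos (by simpa [hZ] using hmem') (measure_ne_top P _)
  have hterm : ∀ t, ((n : ℝ) + 1)⁻¹ ≤
      wμ * Pμ (List.ofFn (fun i : Fin t => ω i)) / Pξ (List.ofFn (fun i : Fin t => ω i)) := by
    intro t
    set h := List.ofFn (fun i : Fin t => ω i)
    have hPξpos : 0 < Pξ h := lt_of_lt_of_le (by have := hPμpos t; positivity) (hdom h)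
    rw [le_div_iff₀ hPξpos]
    calc ((n : ℝ) + 1)⁻¹ * Pξ h
        ≤ ((n : ℝ) + 1)⁻¹ * (((n : ℝ) + 1) * (wμ * Pμ h)) := by
          apply mul_le_mul_of_nonneg_left (hn' t) (by positivity)
      _ = wμ * Pμ h := by
          rw [← mul_assoc, inv_mul_cancel₀ (by positivity), one_mul]
  have hinf : ((n : ℝ) + 1)⁻¹ ≤ ⨅ t : ℕ, wμ * Pμ (List.ofFn (fun i : Fin t => ω i)) /
      Pξ (List.ofFn (fun i : Fin t => ω i)) := le_ciInf hterm
  have : (0 : ℝ) < ((n : ℝ) + 1)⁻¹ := by positivity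
  linarith
end

section
/- If a mixture w over a countable class has finite entropy Ent(w) = ∑_ν w(ν) log(1/w(ν)) < ∞, then the expected cumulative information gain over disjoint blocks of length m starting at offset i is bounded: ∑_{k=0}^∞ E_ξ[ IG(h_{mk+i : m(k+1)+i−1} | h_{<mk+i}) ] ≤ Ent(w), where IG(h'|h) := ∑_ν w(ν|hh') log( w(ν|hh') / w(ν|h) ) and the expectation is under the mixture measure P_ξ. -/
open Finset

set_option linter.unusedSectionVars false
set_option linter.unusedVariables false
set_option maxHeartbeats 1000000

variable {H : Type*} [Fintype H] {M : Type*} [Countable M]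

/-- The Bayesian mixture probability of a finite history. -/
noncomputable def mixP (w : M → ℝ) (P : M → List H → ℝ) (h : List H) : ℝ :=
  ∑' ν, w ν * P ν h

/-- The Bayesian posterior weight w(ν|h) = w(ν)·P_ν(h)/P_ξ(h). -/
noncomputable def post (w : M → ℝ) (P : M → List H → ℝ) (ν : M) (h : List H) : ℝ :=
  w ν * P ν h / mixP w P h

/-- The information gain of observing history `g` beyond its prefix of length
`n`: the KL divergence from the new posterior to the old posterior. -/
noncomputable def infoGain (w : M → ℝ) (P : M → List H → ℝ) (n : ℕ) (g : List H) : ℝ :=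
  ∑' ν, post w P ν g * Real.log (post w P ν g / post w P ν (g.take n))

noncomputable def igG (w : M → ℝ) (P : M → List H → ℝ) (ν : M) (n : ℕ) : ℝ :=
  ∑ g : Fin n → H, w ν * P ν (List.ofFn g) * Real.log (post w P ν (List.ofFn g))

lemma ig_mul_log_ge {x : ℝ} (h0 : 0 ≤ x) : x - 1 ≤ x * Real.log x := by
  rcases eq_or_lt_of_le h0 with h | hx
  · simp [← h]
  · have h1 := Real.log_le_sub_one_of_pos (inv_pos.2 hx)
    rw [Real.log_inv] at h1
    have h2 : x * x⁻¹ = 1 := mul_inv_cancel₀ hx.ne'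
    nlinarith


lemma igP_append_le (P : M → List H → ℝ) (hP0 : ∀ ν h, 0 ≤ P ν h)
    (hPadd : ∀ ν h, ∑ x : H, P ν (h ++ [x]) = P ν h) (ν : M) (l l' : List H) :
    P ν (l ++ l') ≤ P ν l := by
  induction l' using List.reverseRecOn with
  | nil => simp
  | append_singleton l'' x ih =>
      calc P ν (l ++ (l'' ++ [x])) = P ν ((l ++ l'') ++ [x]) := by rw [List.append_assoc]
        _ ≤ ∑ y : H, P ν ((l ++ l'') ++ [y]) :=
            Finset.single_le_sum (f := fun y => P ν ((l ++ l'') ++ [y]))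
              (fun y _ => hP0 ν _) (mem_univ x)
        _ = P ν (l ++ l'') := hPadd ν _
        _ ≤ P ν l := ih


lemma ig_sum_ofFn_succ (n : ℕ) (f : List H → ℝ) :
    ∑ g : Fin (n+1) → H, f (List.ofFn g)
      = ∑ g : Fin n → H, ∑ x : H, f (List.ofFn g ++ [x]) := by
  rw [← (Fin.snocEquiv (fun _ : Fin (n+1) => H)).sum_comp
      (fun g => f (List.ofFn g)), Fintype.sum_prod_type]
  refine Finset.sum_comm.trans ?_
  refine Finset.sum_congr rfl fun g _ => Finset.sum_congr rfl fun x _ => ?_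
  congr 1
  rw [List.ofFn_succ']
  simp [Fin.snocEquiv, List.concat_eq_append]

lemma ig_margin (P : M → List H → ℝ)
    (hP0 : ∀ ν h, 0 ≤ P ν h)
    (hPadd : ∀ ν h, ∑ x : H, P ν (h ++ [x]) = P ν h) (ν : M) (n : ℕ) (f : List H → ℝ) :
    ∀ d : ℕ, ∑ g : Fin (n+d) → H, P ν (List.ofFn g) * f ((List.ofFn g).take n)
      = ∑ g : Fin n → H, P ν (List.ofFn g) * f (List.ofFn g) := by
  intro d
  induction d with
  | zero =>
      refine Finset.sum_congr rfl fun g _ => ?_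
      rw [List.take_of_length_le (by simp)]
  | succ d ih =>
      rw [show n + (d+1) = (n+d)+1 from rfl,
        ig_sum_ofFn_succ (n+d) (fun l => P ν l * f (l.take n))]
      rw [← ih]
      refine Finset.sum_congr rfl fun g _ => ?_
      have htake : ∀ x : H, (List.ofFn g ++ [x]).take n = (List.ofFn g).take n := by
        intro x
        rw [List.take_append_of_le_length (by simpa using Nat.le_add_right n d)]
      calc ∑ x : H, P ν (List.ofFn g ++ [x]) * f ((List.ofFn g ++ [x]).take n)
          = ∑ x : H, P ν (List.ofFn g ++ [x]) * f ((List.ofFn g).take n) := by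
            refine Finset.sum_congr rfl fun x _ => by rw [htake x]
        _ = (∑ x : H, P ν (List.ofFn g ++ [x])) * f ((List.ofFn g).take n) := by
            rw [Finset.sum_mul]
        _ = P ν (List.ofFn g) * f ((List.ofFn g).take n) := by rw [hPadd]

lemma ig_sum_P (P : M → List H → ℝ)
    (hPnil : ∀ ν, P ν ([] : List H) = 1)
    (hPadd : ∀ ν h, ∑ x : H, P ν (h ++ [x]) = P ν h) (ν : M) :
    ∀ n : ℕ, ∑ g : Fin n → H, P ν (List.ofFn g) = 1 := by
  intro n
  induction n with
  | zero => simp [hPnil]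
  | succ n ih =>
      rw [ig_sum_ofFn_succ n (fun l => P ν l)]
      calc ∑ g : Fin n → H, ∑ x : H, P ν (List.ofFn g ++ [x])
          = ∑ g : Fin n → H, P ν (List.ofFn g) :=
            Finset.sum_congr rfl fun g _ => hPadd ν _
        _ = 1 := ih

section
variable (w : M → ℝ) (P : M → List H → ℝ)
  (hw : ∀ ν, 0 ≤ w ν) (hwsum : ∑' ν, w ν = 1) (hwsummable : Summable w)
  (hP0 : ∀ ν h, 0 ≤ P ν h) (hPnil : ∀ ν, P ν ([] : List H) = 1)
  (hPadd : ∀ ν h, ∑ x : H, P ν (h ++ [x]) = P ν h)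
include hw hwsum hwsummable hP0 hPnil hPadd

lemma igP_le_one (ν : M) (l : List H) : P ν l ≤ 1 := by
  have := igP_append_le P hP0 hPadd ν [] l
  simpa [hPnil] using this

lemma igP_take_le (ν : M) (l : List H) (n : ℕ) : P ν l ≤ P ν (l.take n) := by
  conv_lhs => rw [← List.take_append_drop n l]
  exact igP_append_le P hP0 hPadd ν _ _

lemma ig_summable_wP (g : List H) : Summable (fun ν => w ν * P ν g) := by
  refine hwsummable.of_nonneg_of_le (fun ν => mul_nonneg (hw ν) (hP0 ν g)) (fun ν => ?_)
  calc w ν * P ν g ≤ w ν * 1 :=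
        mul_le_mul_of_nonneg_left (igP_le_one w P hw hwsum hwsummable hP0 hPnil hPadd ν g) (hw ν)
    _ = w ν := mul_one _

lemma ig_mixP_nonneg (g : List H) : 0 ≤ mixP w P g :=
  tsum_nonneg (fun ν => mul_nonneg (hw ν) (hP0 ν g))

lemma ig_le_mixP (ν : M) (g : List H) : w ν * P ν g ≤ mixP w P g :=
  Summable.le_tsum (ig_summable_wP w P hw hwsum hwsummable hP0 hPnil hPadd g) ν
    (fun ν' _ => mul_nonneg (hw ν') (hP0 ν' g))

lemma ig_mixP_le_one (g : List H) : mixP w P g ≤ 1 := by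
  have := Summable.tsum_le_tsum (f := fun ν => w ν * P ν g) (g := w)
    (fun ν => by
      calc w ν * P ν g ≤ w ν * 1 :=
        mul_le_mul_of_nonneg_left (igP_le_one w P hw hwsum hwsummable hP0 hPnil hPadd ν g) (hw ν)
      _ = w ν := mul_one _)
    (ig_summable_wP w P hw hwsum hwsummable hP0 hPnil hPadd g) hwsummable
  simpa [mixP, hwsum] using this

lemma ig_wP_eq_zero (g : List H) (hm : mixP w P g = 0) (ν : M) : w ν * P ν g = 0 :=
  le_antisymm (hm ▸ ig_le_mixP w P hw hwsum hwsummable hP0 hPnil hPadd ν g)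
    (mul_nonneg (hw ν) (hP0 ν g))

lemma ig_post_nonneg (ν : M) (g : List H) : 0 ≤ post w P ν g :=
  div_nonneg (mul_nonneg (hw ν) (hP0 ν g))
    (ig_mixP_nonneg w P hw hwsum hwsummable hP0 hPnil hPadd g)

lemma ig_post_le_one (ν : M) (g : List H) : post w P ν g ≤ 1 := by
  rcases eq_or_lt_of_le (ig_mixP_nonneg w P hw hwsum hwsummable hP0 hPnil hPadd g) with h | h
  · simp [post, ← h, ig_wP_eq_zero w P hw hwsum hwsummable hP0 hPnil hPadd g h.symm ν]
  · exact div_le_one_of_le₀ (ig_le_mixP w P hw hwsum hwsummable hP0 hPnil hPadd ν g) h.le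

lemma ig_post_pos (ν : M) (g : List H) (hν : 0 < w ν * P ν g) : 0 < post w P ν g :=
  div_pos hν (lt_of_lt_of_le hν (ig_le_mixP w P hw hwsum hwsummable hP0 hPnil hPadd ν g))


lemma ig_sum_mixP (n : ℕ) : ∑ g : Fin n → H, mixP w P (List.ofFn g) = 1 := by
  have hswap := Summable.tsum_finsetSum (s := (univ : Finset (Fin n → H)))
    (f := fun g ν => w ν * P ν (List.ofFn g))
    (fun g _ => ig_summable_wP w P hw hwsum hwsummable hP0 hPnil hPadd (List.ofFn g))
  have : (∑' ν, ∑ g : Fin n → H, w ν * P ν (List.ofFn g)) = ∑' ν, w ν := by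
    refine tsum_congr fun ν => ?_
    rw [← Finset.mul_sum, ig_sum_P P hPnil hPadd ν n, mul_one]
  simp only [mixP]
  rw [← hswap, this, hwsum]

lemma ig_key (ν : M) (n : ℕ) : w ν * Real.log (w ν) ≤ igG w P ν n := by
  rcases eq_or_lt_of_le (hw ν) with h | hwpos
  · simp [igG, ← h]
  have hterm : ∀ g : Fin n → H,
      w ν * P ν (List.ofFn g) * Real.log (w ν)
        + (w ν * P ν (List.ofFn g) - w ν * mixP w P (List.ofFn g))
      ≤ w ν * P ν (List.ofFn g) * Real.log (post w P ν (List.ofFn g)) := by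
    intro g
    set l := List.ofFn g with hl
    rcases eq_or_lt_of_le (hP0 ν l) with hp | hppos
    · have hmix := ig_mixP_nonneg w P hw hwsum hwsummable hP0 hPnil hPadd l
      simp only [← hp, mul_zero, zero_mul, zero_sub, mul_zero]
      nlinarith
    · have hwP : 0 < w ν * P ν l := mul_pos hwpos hppos
      have hmix : 0 < mixP w P l :=
        lt_of_lt_of_le hwP (ig_le_mixP w P hw hwsum hwsummable hP0 hPnil hPadd ν l)
      have hlogpost : Real.log (post w P ν l)
          = Real.log (w ν) + Real.log (P ν l) - Real.log (mixP w P l) := by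
        rw [post, Real.log_div (ne_of_gt hwP) (ne_of_gt hmix),
          Real.log_mul (ne_of_gt hwpos) (ne_of_gt hppos)]
      have hlog1 : Real.log (mixP w P l / P ν l) ≤ mixP w P l / P ν l - 1 :=
        Real.log_le_sub_one_of_pos (div_pos hmix hppos)
      have hlog2 : Real.log (mixP w P l / P ν l)
          = Real.log (mixP w P l) - Real.log (P ν l) :=
        Real.log_div (ne_of_gt hmix) (ne_of_gt hppos)
      have hcancel : P ν l * (mixP w P l / P ν l) = mixP w P l := by
        field_simp
      rw [hlogpost]
      have h3 : P ν l * (Real.log (mixP w P l) - Real.log (P ν l))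
          ≤ mixP w P l - P ν l := by
        rw [← hlog2]
        nlinarith [mul_le_mul_of_nonneg_left hlog1 (le_of_lt hppos)]
      nlinarith [mul_le_mul_of_nonneg_left h3 (le_of_lt hwpos)]
  have hsum := Finset.sum_le_sum (fun g (_ : g ∈ univ) => hterm g)
  rw [Finset.sum_add_distrib, Finset.sum_sub_distrib, ← Finset.mul_sum,
    ← Finset.mul_sum, ← Finset.sum_mul, ← Finset.mul_sum,
    ig_sum_P P hPnil hPadd ν n,
    ig_sum_mixP w P hw hwsum hwsummable hP0 hPnil hPadd n] at hsum
  simpa [igG] using hsum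

lemma ig_G_nonpos (ν : M) (n : ℕ) : igG w P ν n ≤ 0 := by
  refine Finset.sum_nonpos fun g _ => ?_
  refine mul_nonpos_of_nonneg_of_nonpos (mul_nonneg (hw ν) (hP0 ν _)) ?_
  refine Real.log_nonpos ?_ ?_
  · exact div_nonneg (mul_nonneg (hw ν) (hP0 ν _))
      (ig_mixP_nonneg w P hw hwsum hwsummable hP0 hPnil hPadd _)
  · rcases eq_or_lt_of_le (ig_mixP_nonneg w P hw hwsum hwsummable hP0 hPnil hPadd (List.ofFn g)) with h | h
    · have : w ν * P ν (List.ofFn g) = 0 :=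
        le_antisymm (h ▸ ig_le_mixP w P hw hwsum hwsummable hP0 hPnil hPadd ν _)
          (mul_nonneg (hw ν) (hP0 ν _))
      simp [post, this]
    · exact div_le_one_of_le₀ (ig_le_mixP w P hw hwsum hwsummable hP0 hPnil hPadd ν _) h.le

lemma ig_G_summable (hEnt : Summable (fun ν => w ν * Real.log (1 / w ν))) (n : ℕ) :
    Summable (fun ν => igG w P ν n) := by
  rw [← summable_neg_iff]
  refine hEnt.of_nonneg_of_le (fun ν => ?_) (fun ν => ?_)
  · simpa using ig_G_nonpos w P hw hwsum hwsummable hP0 hPnil hPadd ν n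
  · have := ig_key w P hw hwsum hwsummable hP0 hPnil hPadd ν n
    rw [one_div, Real.log_inv]
    nlinarith

lemma ig_F_ge (hEnt : Summable (fun ν => w ν * Real.log (1 / w ν))) (n : ℕ) :
    -(∑' ν, w ν * Real.log (1 / w ν)) ≤ ∑' ν, igG w P ν n := by
  have h1 : Summable (fun ν => w ν * Real.log (w ν)) := by
    have := hEnt.neg
    refine this.congr fun ν => ?_
    rw [one_div, Real.log_inv]; ring
  have h2 := Summable.tsum_le_tsum (fun ν => ig_key w P hw hwsum hwsummable hP0 hPnil hPadd ν n)
    h1 (ig_G_summable w P hw hwsum hwsummable hP0 hPnil hPadd hEnt n)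
  have h3 : (∑' ν, w ν * Real.log (w ν)) = -(∑' ν, w ν * Real.log (1 / w ν)) := by
    rw [← tsum_neg]
    refine tsum_congr fun ν => ?_
    rw [one_div, Real.log_inv]; ring
  linarith

lemma ig_F_nonpos (n : ℕ) : (∑' ν, igG w P ν n) ≤ 0 :=
  tsum_nonpos (fun ν => ig_G_nonpos w P hw hwsum hwsummable hP0 hPnil hPadd ν n)


lemma ig_w_le_one (ν : M) : w ν ≤ 1 := by
  have := Summable.le_tsum hwsummable ν (fun ν' _ => hw ν')
  rwa [hwsum] at this

/-- lower and upper bound for the generic summand. -/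
lemma ig_s_bound (ν : M) (g : List H) (n : ℕ) :
    w ν * Real.log (w ν) - w ν ≤ w ν * P ν g * Real.log (post w P ν (g.take n))
    ∧ w ν * P ν g * Real.log (post w P ν (g.take n)) ≤ 0 := by
  constructor
  · rcases eq_or_lt_of_le (hw ν) with h0 | hwpos
    · simp [← h0]
    have hw1 : w ν ≤ 1 := ig_w_le_one w P hw hwsum hwsummable hP0 hPnil hPadd ν
    have hlogw : Real.log (w ν) ≤ 0 := Real.log_nonpos (hw ν) hw1
    rcases eq_or_lt_of_le (hP0 ν g) with hp0 | hppos
    · rw [← hp0]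
      nlinarith
    have hPt_pos : 0 < P ν (g.take n) :=
      lt_of_lt_of_le hppos (igP_take_le w P hw hwsum hwsummable hP0 hPnil hPadd ν g n)
    have hPt1 : P ν (g.take n) ≤ 1 := igP_le_one w P hw hwsum hwsummable hP0 hPnil hPadd ν (g.take n)
    have hwPt : 0 < w ν * P ν (g.take n) := mul_pos hwpos hPt_pos
    have hmixt : 0 < mixP w P (g.take n) :=
      lt_of_lt_of_le hwPt (ig_le_mixP w P hw hwsum hwsummable hP0 hPnil hPadd ν (g.take n))
    have hpost_ge : w ν * P ν (g.take n) ≤ post w P ν (g.take n) := by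
      rw [post, le_div_iff₀ hmixt]
      nlinarith [ig_mixP_le_one w P hw hwsum hwsummable hP0 hPnil hPadd (g.take n)]
    have hlog_ge : Real.log (w ν) + Real.log (P ν (g.take n))
        ≤ Real.log (post w P ν (g.take n)) := by
      rw [← Real.log_mul (ne_of_gt hwpos) (ne_of_gt hPt_pos)]
      exact Real.log_le_log hwPt hpost_ge
    have hPg1 : P ν g ≤ 1 := igP_le_one w P hw hwsum hwsummable hP0 hPnil hPadd ν g
    have hPgt : P ν g ≤ P ν (g.take n) := igP_take_le w P hw hwsum hwsummable hP0 hPnil hPadd ν g n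
    have hlogPt : Real.log (P ν (g.take n)) ≤ 0 := Real.log_nonpos (le_of_lt hPt_pos) hPt1
    have hml : P ν (g.take n) - 1 ≤ P ν (g.take n) * Real.log (P ν (g.take n)) :=
      ig_mul_log_ge (le_of_lt hPt_pos)
    have e1 : w ν * P ν g * (Real.log (w ν) + Real.log (P ν (g.take n)))
        ≤ w ν * P ν g * Real.log (post w P ν (g.take n)) :=
      mul_le_mul_of_nonneg_left hlog_ge (by positivity)
    have e2 : Real.log (w ν) ≤ P ν g * Real.log (w ν) := by nlinarith
    have e3 : P ν (g.take n) * Real.log (P ν (g.take n))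
        ≤ P ν g * Real.log (P ν (g.take n)) := by nlinarith
    nlinarith [mul_le_mul_of_nonneg_left e2 (le_of_lt hwpos),
      mul_le_mul_of_nonneg_left e3 (le_of_lt hwpos),
      mul_le_mul_of_nonneg_left hml (le_of_lt hwpos)]
  · refine mul_nonpos_of_nonneg_of_nonpos (mul_nonneg (hw ν) (hP0 ν g)) ?_
    exact Real.log_nonpos (ig_post_nonneg w P hw hwsum hwsummable hP0 hPnil hPadd ν (g.take n)) (ig_post_le_one w P hw hwsum hwsummable hP0 hPnil hPadd ν (g.take n))

lemma ig_s_summable (hEnt : Summable (fun ν => w ν * Real.log (1 / w ν)))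
    (g : List H) (n : ℕ) :
    Summable (fun ν => w ν * P ν g * Real.log (post w P ν (g.take n))) := by
  rw [← summable_neg_iff]
  have h1 : Summable (fun ν => w ν * Real.log (w ν)) := by
    refine hEnt.neg.congr fun ν => ?_
    rw [one_div, Real.log_inv]; ring
  refine (h1.neg.add hwsummable).of_nonneg_of_le (fun ν => ?_) (fun ν => ?_)
  · have := (ig_s_bound w P hw hwsum hwsummable hP0 hPnil hPadd ν g n).2
    linarith
  · have := (ig_s_bound w P hw hwsum hwsummable hP0 hPnil hPadd ν g n).1
    linarith
lemma ig_log_split (ν : M) (g : List H) (n : ℕ) :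
    w ν * P ν g * Real.log (post w P ν g / post w P ν (g.take n))
    = w ν * P ν g * Real.log (post w P ν g)
      - w ν * P ν g * Real.log (post w P ν (g.take n)) := by
  rcases eq_or_lt_of_le (mul_nonneg (hw ν) (hP0 ν g)) with h0 | hpos
  · rw [← h0]; ring
  · have hwpos : 0 < w ν := by
      rcases eq_or_lt_of_le (hw ν) with h | h
      · exfalso; rw [← h, zero_mul] at hpos; exact lt_irrefl _ hpos
      · exact h
    have hPg : 0 < P ν g := by nlinarith [hw ν, hP0 ν g]
    have hpg : 0 < post w P ν g := ig_post_pos w P hw hwsum hwsummable hP0 hPnil hPadd ν g hpos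
    have hPt : 0 < w ν * P ν (g.take n) :=
      mul_pos hwpos (lt_of_lt_of_le hPg (igP_take_le w P hw hwsum hwsummable hP0 hPnil hPadd ν g n))
    have hpt : 0 < post w P ν (g.take n) := ig_post_pos w P hw hwsum hwsummable hP0 hPnil hPadd ν (g.take n) hPt
    rw [Real.log_div (ne_of_gt hpg) (ne_of_gt hpt)]
    ring

lemma ig_mul_IG (g : List H) (n : ℕ) :
    mixP w P g * infoGain w P n g
      = ∑' ν, w ν * P ν g * Real.log (post w P ν g / post w P ν (g.take n)) := by
  rw [infoGain, ← tsum_mul_left]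
  refine tsum_congr fun ν => ?_
  rcases eq_or_ne (mixP w P g) 0 with hm | hm
  · rw [hm, ig_wP_eq_zero w P hw hwsum hwsummable hP0 hPnil hPadd g hm ν]; ring
  · rw [post, div_mul_eq_mul_div, mul_div_assoc']
    rw [mul_comm (mixP w P g), mul_div_assoc, div_self hm, mul_one]

lemma ig_sum_s1 (ν : M) (n : ℕ) :
    ∑ g : Fin n → H, w ν * P ν (List.ofFn g) * Real.log (post w P ν (List.ofFn g))
      = igG w P ν n := rfl

lemma ig_sum_s2 (ν : M) (n d : ℕ) :
    ∑ g : Fin (n+d) → H,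
        w ν * P ν (List.ofFn g) * Real.log (post w P ν ((List.ofFn g).take n))
      = igG w P ν n := by
  have h1 : ∀ g : Fin (n+d) → H,
      w ν * P ν (List.ofFn g) * Real.log (post w P ν ((List.ofFn g).take n))
      = w ν * (P ν (List.ofFn g) * Real.log (post w P ν ((List.ofFn g).take n))) :=
    fun g => by ring
  rw [Finset.sum_congr rfl (fun g _ => h1 g), ← Finset.mul_sum,
    ig_margin P hP0 hPadd ν n (fun l => Real.log (post w P ν l)) d]
  rw [igG, Finset.mul_sum]
  exact Finset.sum_congr rfl fun g _ => by ring

lemma ig_block (hEnt : Summable (fun ν => w ν * Real.log (1 / w ν))) (n d : ℕ) :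
    ∑ g : Fin (n+d) → H, mixP w P (List.ofFn g) * infoGain w P n (List.ofFn g)
      = (∑' ν, igG w P ν (n+d)) - ∑' ν, igG w P ν n := by
  have hs1 : ∀ g : List H, Summable (fun ν => w ν * P ν g * Real.log (post w P ν g)) := by
    intro g
    have := ig_s_summable w P hw hwsum hwsummable hP0 hPnil hPadd hEnt g g.length
    simpa [List.take_length] using this
  have hs2 : ∀ g : List H, ∀ k : ℕ,
      Summable (fun ν => w ν * P ν g * Real.log (post w P ν (g.take k))) :=
    fun g k => ig_s_summable w P hw hwsum hwsummable hP0 hPnil hPadd hEnt g k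
  have hper : ∀ g : Fin (n+d) → H,
      mixP w P (List.ofFn g) * infoGain w P n (List.ofFn g)
      = (∑' ν, w ν * P ν (List.ofFn g) * Real.log (post w P ν (List.ofFn g)))
        - ∑' ν, w ν * P ν (List.ofFn g) * Real.log (post w P ν ((List.ofFn g).take n)) := by
    intro g
    rw [ig_mul_IG w P hw hwsum hwsummable hP0 hPnil hPadd (List.ofFn g) n, ← Summable.tsum_sub (hs1 _) (hs2 _ n)]
    exact tsum_congr fun ν => ig_log_split w P hw hwsum hwsummable hP0 hPnil hPadd ν (List.ofFn g) n
  rw [Finset.sum_congr rfl (fun g _ => hper g), Finset.sum_sub_distrib]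
  congr 1
  · rw [← Summable.tsum_finsetSum (fun g _ => hs1 (List.ofFn g))]
    exact tsum_congr fun ν => ig_sum_s1 w P hw hwsum hwsummable hP0 hPnil hPadd ν (n+d)
  · rw [← Summable.tsum_finsetSum (fun g _ => hs2 (List.ofFn g) n)]
    exact tsum_congr fun ν => ig_sum_s2 w P hw hwsum hwsummable hP0 hPnil hPadd ν n d

lemma ig_mulIG_nonneg (hEnt : Summable (fun ν => w ν * Real.log (1 / w ν)))
    (g : List H) (n : ℕ) : 0 ≤ mixP w P g * infoGain w P n g := by
  rcases eq_or_lt_of_le (ig_mixP_nonneg w P hw hwsum hwsummable hP0 hPnil hPadd g) with hm | hm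
  · rw [← hm, zero_mul]
  refine mul_nonneg (le_of_lt hm) ?_
  have hq_s : Summable (fun ν => post w P ν (g.take n)) := by
    refine ((ig_summable_wP w P hw hwsum hwsummable hP0 hPnil hPadd (g.take n)).div_const (mixP w P (g.take n))).congr fun ν => rfl
  have hp_s : Summable (fun ν => post w P ν g) :=
    ((ig_summable_wP w P hw hwsum hwsummable hP0 hPnil hPadd g).div_const (mixP w P g)).congr fun ν => rfl
  have ht_s : Summable (fun ν => post w P ν g * Real.log (post w P ν g / post w P ν (g.take n))) := by
    have h1 : Summable (fun ν => w ν * P ν g * Real.log (post w P ν g / post w P ν (g.take n))) := by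
      refine Summable.congr (Summable.sub ?_ (ig_s_summable w P hw hwsum hwsummable hP0 hPnil hPadd hEnt g n))
        fun ν => (ig_log_split w P hw hwsum hwsummable hP0 hPnil hPadd ν g n).symm
      have := ig_s_summable w P hw hwsum hwsummable hP0 hPnil hPadd hEnt g g.length
      simpa [List.take_length] using this
    refine (h1.div_const (mixP w P g)).congr fun ν => ?_
    rw [post, div_mul_eq_mul_div]
  have hmixt : 0 < mixP w P (g.take n) := by
    refine lt_of_lt_of_le hm ?_
    refine Summable.tsum_le_tsum (fun ν => ?_) (ig_summable_wP w P hw hwsum hwsummable hP0 hPnil hPadd g) (ig_summable_wP w P hw hwsum hwsummable hP0 hPnil hPadd (g.take n))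
    exact mul_le_mul_of_nonneg_left (igP_take_le w P hw hwsum hwsummable hP0 hPnil hPadd ν g n) (hw ν)
  have htp : (∑' ν, post w P ν g) = 1 := by
    rw [show (fun ν => post w P ν g) = fun ν => (w ν * P ν g) / mixP w P g from rfl]
    rw [tsum_div_const, div_eq_one_iff_eq (ne_of_gt hm)]
    rfl
  have htq : (∑' ν, post w P ν (g.take n)) = 1 := by
    rw [show (fun ν => post w P ν (g.take n)) = fun ν => (w ν * P ν (g.take n)) / mixP w P (g.take n) from rfl]
    rw [tsum_div_const, div_eq_one_iff_eq (ne_of_gt hmixt)]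
    rfl
  have hpq : ∀ ν, post w P ν g - post w P ν (g.take n)
      ≤ post w P ν g * Real.log (post w P ν g / post w P ν (g.take n)) := by
    intro ν
    rcases eq_or_lt_of_le (ig_post_nonneg w P hw hwsum hwsummable hP0 hPnil hPadd ν g) with hp0 | hp0
    · rw [← hp0]
      simpa using ig_post_nonneg w P hw hwsum hwsummable hP0 hPnil hPadd ν (g.take n)
    · have hwPg : 0 < w ν * P ν g := by
        rcases lt_or_eq_of_le (mul_nonneg (hw ν) (hP0 ν g)) with h | h
        · exact h
        · exfalso; rw [post, ← h, zero_div] at hp0; exact lt_irrefl _ hp0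
      have hq0 : 0 < post w P ν (g.take n) := by
        refine ig_post_pos w P hw hwsum hwsummable hP0 hPnil hPadd ν (g.take n) ?_
        have hwpos : 0 < w ν := by nlinarith [hP0 ν g, igP_le_one w P hw hwsum hwsummable hP0 hPnil hPadd ν g]
        have : 0 < P ν g := by nlinarith [hw ν]
        exact mul_pos hwpos (lt_of_lt_of_le this (igP_take_le w P hw hwsum hwsummable hP0 hPnil hPadd ν g n))
      have hlog := Real.log_le_sub_one_of_pos (div_pos hq0 hp0)
      have hlogeq : Real.log (post w P ν g / post w P ν (g.take n))
          = -Real.log (post w P ν (g.take n) / post w P ν g) := by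
        rw [← Real.log_inv, inv_div]
      have hc : post w P ν g * (post w P ν (g.take n) / post w P ν g)
          = post w P ν (g.take n) := by field_simp
      rw [hlogeq]
      nlinarith
  have := Summable.tsum_le_tsum hpq (hp_s.sub hq_s) ht_s
  rw [Summable.tsum_sub hp_s hq_s, htp, htq] at this
  rw [infoGain]
  linarith

end

/-- If the prior w over a countable environment class has finite entropy
Ent(w) = ∑_ν w(ν)·log(1/w(ν)) < ∞, then the expected cumulative information
gain under the mixture measure, over disjoint blocks of length m starting at
offset i, is bounded by Ent(w):
∑_{k=0}^∞ E_ξ[ IG(h_{mk+i : m(k+1)+i−1} | h_{<mk+i}) ] ≤ Ent(w). -/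
theorem stmt_9
    (w : M → ℝ) (hw : ∀ ν, 0 ≤ w ν) (hwsum : ∑' ν, w ν = 1)
    (hwsummable : Summable w)
    (hEnt : Summable (fun ν => w ν * Real.log (1 / w ν)))
    (P : M → List H → ℝ) (hP0 : ∀ ν h, 0 ≤ P ν h)
    (hPnil : ∀ ν, P ν ([] : List H) = 1)
    (hPadd : ∀ ν h, ∑ x : H, P ν (h ++ [x]) = P ν h)
    (m i : ℕ) :
    (∑' k : ℕ, ∑ g : Fin (m * (k + 1) + i) → H,
        mixP w P (List.ofFn g) *
          infoGain w P (m * k + i) (List.ofFn g)) ≤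
      ∑' ν, w ν * Real.log (1 / w ν) := by
  apply Real.tsum_le_of_sum_range_le
  · intro k
    exact Finset.sum_nonneg fun g _ =>
      ig_mulIG_nonneg w P hw hwsum hwsummable hP0 hPnil hPadd hEnt (List.ofFn g) (m*k+i)
  · intro K
    have hTk : ∀ k : ℕ,
        (∑ g : Fin (m * (k + 1) + i) → H,
          mixP w P (List.ofFn g) * infoGain w P (m * k + i) (List.ofFn g))
        = (∑' ν, igG w P ν (m * (k+1) + i)) - ∑' ν, igG w P ν (m * k + i) := by
      intro k
      have harith : m * (k + 1) + i = (m * k + i) + m := by ring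
      rw [harith]
      exact ig_block w P hw hwsum hwsummable hP0 hPnil hPadd hEnt (m*k+i) m
    rw [Finset.sum_congr rfl (fun k _ => hTk k)]
    have htel := Finset.sum_range_sub (f := fun k => ∑' ν, igG w P ν (m * k + i)) K
    rw [htel]
    have h1 := ig_F_nonpos w P hw hwsum hwsummable hP0 hPnil hPadd (m * K + i)
    have h2 := ig_F_ge w P hw hwsum hwsummable hP0 hPnil hPadd hEnt (m * 0 + i)
    linarith
end
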